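/- The set E₊ of positive equilibria is nonempty. Moreover, for any fixed x̄ ∈ E₊ and any x ∈ (0,∞)ⁿ, one has x ∈ E₊ if and only if ρ⃗(x) − ρ⃗(x̄) ∈ D^⊥, i.e. if and only if ⟨b_i − b_j, ρ⃗(x) − ρ⃗(x̄)⟩ = 0 for all i, j ∈ {1,…,m}. -/

import Mathlib

lemma aux_pow_nonneg {m : ℕ} (P : Matrix (Fin m) (Fin m) ℝ)
    (hP : ∀ i j, 0 ≤ P i j) : ∀ r, ∀ i j, 0 ≤ (P ^ r) i j := by
  intro r
  induction r with
  | zero =>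
    intro i j; rw [pow_zero]
    by_cases h : i = j <;> simp [Matrix.one_apply, h]
  | succ r ih =>
    intro i j
    rw [pow_succ, Matrix.mul_apply]
    exact Finset.sum_nonneg fun k _ => mul_nonneg (ih i k) (hP k j)

lemma aux_pow_pos {m : ℕ} (P Q : Matrix (Fin m) (Fin m) ℝ)
    (hP : ∀ i j, 0 ≤ P i j) (hQ : ∀ i j, 0 ≤ Q i j)
    (h : ∀ i j, 0 < P i j → 0 < Q i j) :
    ∀ r i j, 0 < (P ^ r) i j → 0 < (Q ^ r) i j := by
  intro r
  induction r with
  | zero => intro i j; rw [pow_zero, pow_zero]; exact id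
  | succ r ih =>
    intro i j hpos
    rw [pow_succ, Matrix.mul_apply] at hpos
    rw [pow_succ, Matrix.mul_apply]
    have h0 : ∑ k : Fin m, (0:ℝ) < ∑ k, (P ^ r) i k * P k j := by simpa using hpos
    obtain ⟨k, -, hk⟩ := Finset.exists_lt_of_sum_lt h0
    have h1 : 0 < (P ^ r) i k := by
      rcases lt_or_eq_of_le (aux_pow_nonneg P hP r i k) with h' | h'
      · exact h'
      · exfalso; rw [← h'] at hk; simpa using hk
    have h2 : 0 < P k j := by
      rcases lt_or_eq_of_le (hP k j) with h' | h'
      · exact h'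
      · exfalso; rw [← h'] at hk; simpa using hk
    refine lt_of_lt_of_le (mul_pos (ih i k h1) (h k j h2)) ?_
    exact Finset.single_le_sum (f := fun k => (Q ^ r) i k * Q k j)
      (fun k _ => mul_nonneg (aux_pow_nonneg Q hQ r i k) (hQ k j)) (Finset.mem_univ k)

theorem stmt_10
    (n m : ℕ) (hm : 0 < m) (hmn : m ≤ n)
    (θ : ℝ → ℝ)
    (hθlip : LocallyLipschitz θ)
    (hθ0 : θ 0 = 0)
    (hθnn : ∀ y : ℝ, 0 ≤ θ y)
    (hθmono : StrictMonoOn θ (Set.Ici (0:ℝ)))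
    (hθonto : ∀ r : ℝ, 0 ≤ r → ∃ y : ℝ, 0 ≤ y ∧ θ y = r)
    (hθint : MeasureTheory.IntegrableOn (fun y => |Real.log (θ y)|) (Set.Ioc (0:ℝ) 1))
    (A : Matrix (Fin m) (Fin m) ℝ)
    (hAnn : ∀ i j, 0 ≤ A i j)
    (hAirr : ∀ i j, 0 < ((1 + A) ^ (m - 1)) i j)
    (B : Matrix (Fin n) (Fin m) ℝ)
    (hBnn : ∀ k j, 0 ≤ B k j)
    (hBrank : B.rank = m)
    (hBrow : ∀ k, ∃ j, B k j ≠ 0)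
    (hBent : ∀ k j, B k j = 0 ∨ 1 ≤ B k j)
    (f : EuclideanSpace ℝ (Fin n) → EuclideanSpace ℝ (Fin n))
    (hf : ∀ x : EuclideanSpace ℝ (Fin n), ∀ k : Fin n,
      f x k = ∑ i : Fin m, ∑ j : Fin m,
        A i j * (∏ l : Fin n, θ (x l) ^ (B l j)) * (B k i - B k j))
    :
    (∃ xbar : EuclideanSpace ℝ (Fin n), (∀ k, 0 < xbar k) ∧ f xbar = 0) ∧
    (∀ xbar : EuclideanSpace ℝ (Fin n), (∀ k, 0 < xbar k) → f xbar = 0 →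
      ∀ x : EuclideanSpace ℝ (Fin n), (∀ k, 0 < x k) →
        (f x = 0 ↔ ∀ i j : Fin m,
          ∑ k, (B k i - B k j) * (Real.log (θ (x k)) - Real.log (θ (xbar k))) = 0)) := by
  classical
  have hθpos : ∀ {y : ℝ}, 0 < y → 0 < θ y := by
    intro y hy
    have := hθmono (Set.mem_Ici.mpr le_rfl) (Set.mem_Ici.mpr hy.le) hy
    rwa [hθ0] at this
  -- column sums and constant c
  set s : Fin m → ℝ := fun j => ∑ i, A i j with hs
  set c : ℝ := 1 + ∑ j, s j with hc
  have hsnn : ∀ j, 0 ≤ s j := fun j => Finset.sum_nonneg fun i _ => hAnn i j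
  have hcs : ∀ j, s j + 1 ≤ c := by
    intro j
    have h1 : s j ≤ ∑ j, s j := Finset.single_le_sum (fun j _ => hsnn j) (Finset.mem_univ j)
    rw [hc]; linarith
  have hj0 : (⟨0, hm⟩ : Fin m) = ⟨0, hm⟩ := rfl
  have hcpos : 0 < c := lt_of_lt_of_le (by linarith [hsnn (⟨0, hm⟩ : Fin m)]) (hcs ⟨0, hm⟩)
  -- the matrix M
  set M : Matrix (Fin m) (Fin m) ℝ := (fun i j => A i j + if i = j then c - s j else 0)
    with hMdef
  have hMnn : ∀ i j, 0 ≤ M i j := by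
    intro i j
    rw [hMdef]
    refine add_nonneg (hAnn i j) ?_
    split
    · linarith [hcs j]
    · exact le_refl 0
  have hMmul : ∀ (v : Fin m → ℝ) (i), M.mulVec v i = (∑ j, A i j * v j) + (c - s i) * v i := by
    intro v i
    show ∑ j, M i j * v j = _
    have e : ∀ j, M i j * v j = A i j * v j + (if i = j then (c - s j) * v j else 0) := by
      intro j; rw [hMdef]; dsimp only; split <;> ring
    rw [Finset.sum_congr rfl fun j _ => e j, Finset.sum_add_distrib, Finset.sum_ite_eq]
    simp
  have hMcol : ∀ j, ∑ i, M i j = c := by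
    intro j
    have e : ∀ i, M i j = A i j + (if i = j then c - s j else 0) := fun i => by rw [hMdef]
    rw [Finset.sum_congr rfl fun i _ => e i, Finset.sum_add_distrib, Finset.sum_ite_eq']
    simp [hs]
  -- positivity of powers of 1 + M
  have h1Ann : ∀ i j, 0 ≤ (1 + A) i j := by
    intro i j
    rw [Matrix.add_apply, Matrix.one_apply]
    split
    · linarith [hAnn i j]
    · simpa using hAnn i j
  have h1Mnn : ∀ i j, 0 ≤ (1 + M) i j := by
    intro i j
    rw [Matrix.add_apply, Matrix.one_apply]
    split
    · linarith [hMnn i j]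
    · simpa using hMnn i j
  have hsupp : ∀ i j, 0 < (1 + A) i j → 0 < (1 + M) i j := by
    intro i j h
    rw [Matrix.add_apply, Matrix.one_apply]
    by_cases hij : i = j
    · rw [if_pos hij]
      have : 0 ≤ M i j := hMnn i j
      linarith
    · rw [if_neg hij]
      rw [Matrix.add_apply, Matrix.one_apply, if_neg hij] at h
      have hMe : M i j = A i j := by rw [hMdef]; simp [hij]
      rw [hMe]; linarith
  have hQpos : ∀ i j, 0 < (((1 + M) : Matrix (Fin m) (Fin m) ℝ) ^ (m - 1)) i j :=
    fun i j => aux_pow_pos (1 + A) (1 + M) h1Ann h1Mnn hsupp (m - 1) i j (hAirr i j)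
  -- eigenvector powers
  have hQeig : ∀ (u : Fin m → ℝ), M.mulVec u = c • u →
      ∀ r, (((1 + M) : Matrix (Fin m) (Fin m) ℝ) ^ r).mulVec u = ((1 + c) ^ r) • u := by
    intro u hu r
    induction r with
    | zero => simp [Matrix.one_mulVec]
    | succ r ih =>
      rw [pow_succ, ← Matrix.mulVec_mulVec]
      have h1 : (1 + M).mulVec u = (1 + c) • u := by
        rw [Matrix.add_mulVec, Matrix.one_mulVec, hu]
        funext i; simp; ring
      rw [h1, Matrix.mulVec_smul, ih]
      funext i; simp; ring
  -- zero entry kills nonnegative eigenvectors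
  have hker0 : ∀ u : Fin m → ℝ, (∀ j, 0 ≤ u j) → M.mulVec u = c • u →
      (∃ j0, u j0 = 0) → u = 0 := by
    rintro u hunn hu ⟨j0, hj0⟩
    have h := hQeig u hu (m - 1)
    have h0 : ∑ k, (((1 + M) : Matrix (Fin m) (Fin m) ℝ) ^ (m - 1)) j0 k * u k = 0 := by
      have h2 := congrFun h j0
      have h3 : (((1 + M) : Matrix (Fin m) (Fin m) ℝ) ^ (m - 1)).mulVec u j0
        = ∑ k, (((1 + M) : Matrix (Fin m) (Fin m) ℝ) ^ (m - 1)) j0 k * u k := rfl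
      rw [h3] at h2
      rw [h2]
      simp [hj0]
    have hall := (Finset.sum_eq_zero_iff_of_nonneg
      (fun k _ => mul_nonneg (le_of_lt (hQpos j0 k)) (hunn k))).mp h0
    funext k
    have hk := hall k (Finset.mem_univ k)
    have := (hQpos j0 k).ne'
    rcases mul_eq_zero.mp hk with h' | h'
    · exact absurd h' this
    · simpa using h'
  have hkerpos : ∀ u : Fin m → ℝ, (∀ j, 0 ≤ u j) → u ≠ 0 → M.mulVec u = c • u →
      ∀ j, 0 < u j := by
    intro u hnn hne hu j
    rcases lt_or_eq_of_le (hnn j) with h | h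
    · exact h
    · exact absurd (hker0 u hnn hu ⟨j, h.symm⟩) hne
  -- existence of a positive eigenvector
  set L : Matrix (Fin m) (Fin m) ℝ := M - c • (1 : Matrix (Fin m) (Fin m) ℝ) with hL
  have hLdet : L.det = 0 := by
    have h1 : L.transpose.mulVec (fun _ => (1:ℝ)) = 0 := by
      funext j
      show ∑ i, L.transpose j i * (1:ℝ) = 0
      have e : ∀ i, L.transpose j i * (1:ℝ)
          = M i j - c * (if i = j then 1 else 0) := by
        intro i
        rw [Matrix.transpose_apply, hL]
        simp [Matrix.sub_apply, Matrix.smul_apply, Matrix.one_apply]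
      rw [Finset.sum_congr rfl fun i _ => e i, Finset.sum_sub_distrib, hMcol j]
      simp [mul_ite, Finset.sum_ite_eq']
    have hdet : L.transpose.det = 0 := by
      rw [← Matrix.exists_mulVec_eq_zero_iff]
      refine ⟨fun _ => (1:ℝ), ?_, h1⟩
      intro hcontra
      have := congrFun hcontra ⟨0, hm⟩
      simpa using this
    rwa [Matrix.det_transpose] at hdet
  obtain ⟨v0, hv0ne, hv0⟩ := Matrix.exists_mulVec_eq_zero_iff.mpr hLdet
  have hv0eig : M.mulVec v0 = c • v0 := by
    rw [hL, Matrix.sub_mulVec, Matrix.smul_mulVec, Matrix.one_mulVec] at hv0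
    have := sub_eq_zero.mp hv0
    exact this
  set w : Fin m → ℝ := fun i => |v0 i| with hw
  have hweig : M.mulVec w = c • w := by
    have hge : ∀ i, c * w i ≤ M.mulVec w i := by
      intro i
      have h1 : |M.mulVec v0 i| = c * w i := by
        rw [hv0eig]
        show |c * v0 i| = c * |v0 i|
        rw [abs_mul, abs_of_pos hcpos]
      calc c * w i = |∑ j, M i j * v0 j| := by rw [← h1]; rfl
        _ ≤ ∑ j, |M i j * v0 j| := Finset.abs_sum_le_sum_abs _ _
        _ = ∑ j, M i j * w j := by
            refine Finset.sum_congr rfl fun j _ => ?_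
            rw [abs_mul, abs_of_nonneg (hMnn i j)]
        _ = M.mulVec w i := rfl
    have hsum : ∑ i, (M.mulVec w i - c * w i) = 0 := by
      rw [Finset.sum_sub_distrib]
      have h1 : ∑ i, M.mulVec w i = ∑ j, c * w j := by
        show ∑ i, ∑ j, M i j * w j = _
        rw [Finset.sum_comm]
        refine Finset.sum_congr rfl fun j _ => ?_
        rw [← Finset.sum_mul, hMcol j]
      rw [h1]
      simp [Finset.mul_sum]
    have hall := (Finset.sum_eq_zero_iff_of_nonneg
      (fun i _ => sub_nonneg.mpr (hge i))).mp hsum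
    funext i
    have := hall i (Finset.mem_univ i)
    have h2 : M.mulVec w i = c * w i := by linarith [sub_eq_zero.mp this]
    simpa using h2
  have hwne : w ≠ 0 := by
    obtain ⟨i, hi⟩ := Function.ne_iff.mp hv0ne
    intro hcontra
    have := congrFun hcontra i
    simp only [hw, Pi.zero_apply] at this
    exact hi (abs_eq_zero.mp this)
  have hwnn : ∀ j, 0 ≤ w j := fun j => abs_nonneg _
  have hwpos : ∀ j, 0 < w j := hkerpos w hwnn hwne hweig
  -- rank facts about B
  have hfinrank : Module.finrank ℝ (Fin m → ℝ) = m := by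
    rw [Module.finrank_pi]; simp
  have hBinj : ∀ u : Fin m → ℝ, B.mulVec u = 0 → u = 0 := by
    intro u hu
    have h1 := B.mulVecLin.finrank_range_add_finrank_ker
    have h2 : Module.finrank ℝ (LinearMap.range B.mulVecLin) = m := hBrank
    rw [h2, hfinrank] at h1
    have h4 : Module.finrank ℝ (LinearMap.ker B.mulVecLin) = 0 := by omega
    have h5 : LinearMap.ker B.mulVecLin = ⊥ := Submodule.finrank_eq_zero.mp h4
    have h6 : u ∈ LinearMap.ker B.mulVecLin := by
      rw [LinearMap.mem_ker, Matrix.mulVecLin_apply]; exact hu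
    rwa [h5, Submodule.mem_bot] at h6
  have hBTsurj : ∀ z : Fin m → ℝ, ∃ y : Fin n → ℝ, B.transpose.mulVec y = z := by
    intro z
    have h1 : LinearMap.range B.transpose.mulVecLin = ⊤ := by
      apply Submodule.eq_top_of_finrank_eq
      have h2 : Module.finrank ℝ (LinearMap.range B.transpose.mulVecLin) = B.transpose.rank := rfl
      rw [h2, Matrix.rank_transpose, hBrank, hfinrank]
    have h3 : z ∈ LinearMap.range B.transpose.mulVecLin := by rw [h1]; trivial
    obtain ⟨y, hy⟩ := h3
    exact ⟨y, by rwa [Matrix.mulVecLin_apply] at hy⟩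
  -- the monomial vector
  set vv : EuclideanSpace ℝ (Fin n) → Fin m → ℝ :=
    fun x j => ∏ l, θ (x l) ^ (B l j) with hvv
  have hvvpos : ∀ x : EuclideanSpace ℝ (Fin n), (∀ k, 0 < x k) → ∀ j, 0 < vv x j := by
    intro x hx j
    exact Finset.prod_pos fun l _ => Real.rpow_pos_of_pos (hθpos (hx l)) _
  -- identity for f
  have hfid : ∀ x : EuclideanSpace ℝ (Fin n), ∀ k, f x k
      = ∑ i, B k i * ((∑ j, A i j * vv x j) - s i * vv x i) := by
    intro x k
    rw [hf x k]
    have lhs : ∑ i, ∑ j, A i j * vv x j * (B k i - B k j)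
        = (∑ i, (∑ j, A i j * vv x j) * B k i) - ∑ i, (s i * vv x i) * B k i := by
      have e1 : ∀ i, ∑ j, A i j * vv x j * (B k i - B k j)
          = (∑ j, A i j * vv x j * B k i) - ∑ j, A i j * vv x j * B k j := by
        intro i
        rw [← Finset.sum_sub_distrib]
        exact Finset.sum_congr rfl fun j _ => by ring
      rw [Finset.sum_congr rfl fun i _ => e1 i, Finset.sum_sub_distrib]
      congr 1
      · exact Finset.sum_congr rfl fun i _ => by rw [Finset.sum_mul]
      · rw [Finset.sum_comm]
        refine Finset.sum_congr rfl fun j _ => ?_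
        rw [hs]
        dsimp only
        rw [Finset.sum_mul, Finset.sum_mul]
    rw [lhs, ← Finset.sum_sub_distrib]
    exact Finset.sum_congr rfl fun i _ => by ring
  -- f x = 0 iff vv x is an eigenvector
  have hfiff : ∀ x : EuclideanSpace ℝ (Fin n), (f x = 0 ↔ M.mulVec (vv x) = c • vv x) := by
    intro x
    constructor
    · intro hx0
      have hg : B.mulVec (fun i => (∑ j, A i j * vv x j) - s i * vv x i) = 0 := by
        funext k
        have h1 : f x k = 0 := by
          have := congrArg (fun v : EuclideanSpace ℝ (Fin n) => v k) hx0
          exact this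
        rw [hfid x k] at h1
        exact h1
      have hg0 := hBinj _ hg
      funext i
      have h2 := congrFun hg0 i
      simp only [Pi.zero_apply] at h2
      rw [hMmul]
      have h3 : ∑ j, A i j * vv x j = s i * vv x i := by linarith [sub_eq_zero.mp h2]
      show _ = c * vv x i
      rw [h3]; ring
    · intro heig
      ext k
      show f x k = 0
      rw [hfid x k]
      have hgz : ∀ i, (∑ j, A i j * vv x j) - s i * vv x i = 0 := by
        intro i
        have h1 := congrFun heig i
        rw [hMmul] at h1
        have h2 : (∑ j, A i j * vv x j) + (c - s i) * vv x i = c * vv x i := h1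
        linarith
      rw [Finset.sum_congr rfl fun i _ => by rw [hgz i, mul_zero]]
      simp
  -- ratio uniqueness for positive eigenvectors
  have hratio : ∀ v u : Fin m → ℝ, (∀ j, 0 < v j) → (∀ j, 0 < u j) →
      M.mulVec v = c • v → M.mulVec u = c • u →
      ∃ t : ℝ, 0 < t ∧ ∀ j, v j = t * u j := by
    intro v u hv hu hveig hueig
    obtain ⟨p0, -, hp0⟩ := Finset.exists_min_image Finset.univ (fun j => v j / u j)
      ⟨⟨0, hm⟩, Finset.mem_univ _⟩
    set t := v p0 / u p0 with ht
    refine ⟨t, div_pos (hv p0) (hu p0), ?_⟩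
    have hunn : ∀ j, 0 ≤ v j - t * u j := by
      intro j
      have h1 : t ≤ v j / u j := hp0 j (Finset.mem_univ j)
      have h2 := (le_div_iff₀ (hu j)).mp h1
      linarith
    have heig : M.mulVec (v - t • u) = c • (v - t • u) := by
      rw [Matrix.mulVec_sub, Matrix.mulVec_smul, hveig, hueig]
      funext i; simp; ring
    have hz : v p0 - t * u p0 = 0 := by
      rw [ht, div_mul_cancel₀ _ (hu p0).ne', sub_self]
    have h0 := hker0 (v - t • u) (fun j => by simpa using hunn j) heig
      ⟨p0, by simpa using hz⟩
    intro j
    have := congrFun h0 j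
    simp only [Pi.sub_apply, Pi.smul_apply, smul_eq_mul, Pi.zero_apply] at this
    linarith
  -- log identity
  have hlogvv : ∀ x : EuclideanSpace ℝ (Fin n), (∀ k, 0 < x k) → ∀ j,
      Real.log (vv x j) = ∑ l, B l j * Real.log (θ (x l)) := by
    intro x hx j
    rw [hvv]
    dsimp only
    rw [Real.log_prod (fun l _ => (Real.rpow_pos_of_pos (hθpos (hx l)) _).ne')]
    exact Finset.sum_congr rfl fun l _ => Real.log_rpow (hθpos (hx l)) _
  -- sums rewritten via log ratios
  have hsumlog : ∀ (x xb : EuclideanSpace ℝ (Fin n)), (∀ k, 0 < x k) → (∀ k, 0 < xb k) →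
      ∀ i, ∑ k, B k i * (Real.log (θ (x k)) - Real.log (θ (xb k)))
        = Real.log (vv x i) - Real.log (vv xb i) := by
    intro x xb hx hxb i
    rw [hlogvv x hx i, hlogvv xb hxb i, ← Finset.sum_sub_distrib]
    exact Finset.sum_congr rfl fun k _ => by ring
  constructor
  · -- existence
    obtain ⟨y, hy⟩ := hBTsurj (fun j => Real.log (w j))
    choose xb0 hxb1 hxb2 using fun k => hθonto (Real.exp (y k)) (Real.exp_pos _).le
    let xb : EuclideanSpace ℝ (Fin n) := WithLp.toLp 2 xb0
    have hxbpos : ∀ k, 0 < xb k := by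
      intro k
      rcases lt_or_eq_of_le (hxb1 k) with h | h
      · exact h
      · exfalso
        have h2 := hxb2 k
        rw [← h, hθ0] at h2
        exact (Real.exp_pos (y k)).ne h2
    refine ⟨xb, hxbpos, ?_⟩
    have hvvxb : vv xb = w := by
      funext j
      rw [hvv]
      dsimp only
      have e : ∀ l, θ (xb l) ^ (B l j) = Real.exp (y l * B l j) := by
        intro l
        rw [show xb l = xb0 l from rfl, hxb2 l, Real.rpow_def_of_pos (Real.exp_pos _), Real.log_exp]
      rw [Finset.prod_congr rfl fun l _ => e l, ← Real.exp_sum]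
      have h1 : ∑ l, y l * B l j = B.transpose.mulVec y j := by
        show _ = ∑ l, B.transpose j l * y l
        exact Finset.sum_congr rfl fun l _ => by rw [Matrix.transpose_apply]; ring
      rw [h1, hy, Real.exp_log (hwpos j)]
    exact (hfiff xb).mpr (by rw [hvvxb]; exact hweig)
  · -- characterization
    intro xbar hxbarpos hfxbar x hxpos
    have hvb : M.mulVec (vv xbar) = c • vv xbar := (hfiff xbar).mp hfxbar
    constructor
    · intro hfx i j
      have hvx := (hfiff x).mp hfx
      obtain ⟨t, ht, hrt⟩ := hratio (vv x) (vv xbar) (hvvpos x hxpos) (hvvpos xbar hxbarpos)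
        hvx hvb
      have hcond : ∀ i, ∑ k, B k i * (Real.log (θ (x k)) - Real.log (θ (xbar k)))
          = Real.log t := by
        intro i
        rw [hsumlog x xbar hxpos hxbarpos i, hrt i,
          Real.log_mul ht.ne' (hvvpos xbar hxbarpos i).ne']
        ring
      have expand : ∑ k, (B k i - B k j) * (Real.log (θ (x k)) - Real.log (θ (xbar k)))
          = (∑ k, B k i * (Real.log (θ (x k)) - Real.log (θ (xbar k))))
            - ∑ k, B k j * (Real.log (θ (x k)) - Real.log (θ (xbar k))) := by
        rw [← Finset.sum_sub_distrib]
        exact Finset.sum_congr rfl fun k _ => by ring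
      rw [expand, hcond i, hcond j, sub_self]
    · intro hcond
      apply (hfiff x).mpr
      set r := vv x ⟨0, hm⟩ / vv xbar ⟨0, hm⟩ with hr
      have hrpos : 0 < r := div_pos (hvvpos x hxpos _) (hvvpos xbar hxbarpos _)
      have hprop : ∀ j, vv x j = r * vv xbar j := by
        intro j
        have h1 := hcond j ⟨0, hm⟩
        have expand : ∑ k, (B k j - B k ⟨0, hm⟩) * (Real.log (θ (x k)) - Real.log (θ (xbar k)))
            = (∑ k, B k j * (Real.log (θ (x k)) - Real.log (θ (xbar k))))
              - ∑ k, B k ⟨0, hm⟩ * (Real.log (θ (x k)) - Real.log (θ (xbar k))) := by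
          rw [← Finset.sum_sub_distrib]
          exact Finset.sum_congr rfl fun k _ => by ring
        rw [expand, hsumlog x xbar hxpos hxbarpos j, hsumlog x xbar hxpos hxbarpos ⟨0, hm⟩]
          at h1
        have h2 : Real.log (vv x j / vv xbar j) = Real.log (vv x ⟨0, hm⟩ / vv xbar ⟨0, hm⟩) := by
          rw [Real.log_div (hvvpos x hxpos j).ne' (hvvpos xbar hxbarpos j).ne',
            Real.log_div (hvvpos x hxpos _).ne' (hvvpos xbar hxbarpos _).ne']
          linarith
        have h3 : vv x j / vv xbar j = r := by
          have h4 := congrArg Real.exp h2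
          rwa [Real.exp_log (div_pos (hvvpos x hxpos j) (hvvpos xbar hxbarpos j)),
            Real.exp_log (div_pos (hvvpos x hxpos _) (hvvpos xbar hxbarpos _))] at h4
        rw [div_eq_iff (hvvpos xbar hxbarpos j).ne'] at h3
        linarith [h3]
      have hveq : vv x = r • vv xbar := by
        funext j
        simpa using hprop j
      rw [hveq, Matrix.mulVec_smul, hvb]
      funext i; simp; ring
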